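/- Suppose G is a connected undirected graph with incidence matrix B and E = [I_p;0] with p ≥ 1, h_i, f_k, g_i are continuous strictly increasing functions applied componentwise, Q is diagonal positive definite, and L is the Laplacian of a balanced strongly connected digraph. Then every solution (x̄, μ̄, ξ̄, θ̄, φ̄) of the equilibrium equations 0 = −B f(μ̄) + E g(θ̄) − d; 0 = Bᵀ(h(x̄) − ȳ) − (f(μ̄) − ξ̄); 0 = f(μ̄) − ξ̄; 0 = −Eᵀ(h(x̄) − ȳ) − (g(θ̄) − φ̄); 0 = (g(θ̄) − φ̄) − Q L (Q φ̄ + r) satisfies h(x̄) = ȳ and g(θ̄) = φ̄ = ū, where ū = Q⁻¹(λ*·1_p − r) with λ* = (1_nᵀd + 1_pᵀQ⁻¹r)/(1_pᵀQ⁻¹1_p). -/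

import Mathlib

open Matrix BigOperators Filter Topology MeasureTheory

/-- An undirected graph on `Fin n` with `m` edges, each edge given an arbitrary
orientation: edge `k` goes from its positive end `pos k` to its negative end `neg k`. -/
structure OrientedGraph (n m : ℕ) where
  pos : Fin m → Fin n
  neg : Fin m → Fin n
  ne_ends : ∀ k, pos k ≠ neg k

namespace OrientedGraph

variable {n m : ℕ}

/-- The oriented incidence matrix `B ∈ ℝ^{n×m}`. -/
def inc (G : OrientedGraph n m) : Matrix (Fin n) (Fin m) ℝ :=
  Matrix.of fun i k => if i = G.pos k then (1 : ℝ) else if i = G.neg k then -1 else 0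

/-- Adjacency in the underlying undirected graph. -/
def Adj (G : OrientedGraph n m) (i j : Fin n) : Prop :=
  ∃ k, (G.pos k = i ∧ G.neg k = j) ∨ (G.pos k = j ∧ G.neg k = i)

/-- Connectedness of the underlying undirected graph. -/
def Connected (G : OrientedGraph n m) : Prop :=
  ∀ i j : Fin n, Relation.ReflTransGen G.Adj i j

end OrientedGraph

/-- The matrix `E = [I_p ; 0_{(n-p)×p}]` selecting the first `p` nodes. -/
def selE (n p : ℕ) : Matrix (Fin n) (Fin p) ℝ :=
  Matrix.of fun i j => if (i : ℕ) = (j : ℕ) then 1 else 0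

/-- Componentwise application of a family of scalar functions. -/
def cw {k : ℕ} (f : Fin k → ℝ → ℝ) (x : Fin k → ℝ) : Fin k → ℝ :=
  fun i => f i (x i)

/-- `λ* = (1ₙᵀ d + 1ₚᵀ Q⁻¹ r)/(1ₚᵀ Q⁻¹ 1ₚ)` for `Q = diag q`. -/
noncomputable def lamStar {n p : ℕ} (q r : Fin p → ℝ) (d : Fin n → ℝ) : ℝ :=
  ((∑ i, d i) + ∑ i, r i / q i) / (∑ i, (q i)⁻¹)

/-- The optimal input `ū = Q⁻¹(λ*·1ₚ − r)`. -/
noncomputable def uOpt {n p : ℕ} (q r : Fin p → ℝ) (d : Fin n → ℝ) : Fin p → ℝ :=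
  fun i => (lamStar q r d - r i) / q i

/-- The cost `C(u) = ½ uᵀQu + rᵀu + s` for `Q = diag q`. -/
noncomputable def cost {p : ℕ} (q r : Fin p → ℝ) (s : ℝ) (u : Fin p → ℝ) : ℝ :=
  (1 / 2) * (∑ i, q i * u i ^ 2) + (∑ i, r i * u i) + s

/-- `L` is the Laplacian matrix of a balanced, strongly connected weighted digraph:
nonpositive off-diagonal entries, zero row sums, zero column sums, and the digraph
whose arcs are the pairs with `L i j < 0` is strongly connected. -/
structure IsBalancedStronglyConnectedLaplacian {p : ℕ} (L : Matrix (Fin p) (Fin p) ℝ) : Prop where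
  offdiag_nonpos : ∀ i j, i ≠ j → L i j ≤ 0
  rowsum : L.mulVec (fun _ => 1) = 0
  colsum : Matrix.vecMul (fun _ => 1) L = 0
  sconn : ∀ i j : Fin p, Relation.ReflTransGen (fun a b => a ≠ b ∧ L a b < 0) i j

lemma inc_apply {n m} (G : OrientedGraph n m) (i : Fin n) (k : Fin m) :
    G.inc i k = (if i = G.pos k then (1:ℝ) else 0) + (if i = G.neg k then -1 else 0) := by
  rcases eq_or_ne i (G.pos k) with h1 | h1 <;> rcases eq_or_ne i (G.neg k) with h2 | h2
  · exact absurd (h1.symm.trans h2) (G.ne_ends k)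
  all_goals simp [OrientedGraph.inc, h1, h2, (G.ne_ends k), (G.ne_ends k).symm]

lemma inc_colsum {n m} (G : OrientedGraph n m) (k : Fin m) :
    ∑ i, G.inc i k = 0 := by
  simp [inc_apply, Finset.sum_add_distrib]

lemma incT_mulVec {n m} (G : OrientedGraph n m) (v : Fin n → ℝ) (k : Fin m) :
    (G.inc)ᵀ.mulVec v k = v (G.pos k) - v (G.neg k) := by
  simp [Matrix.mulVec, dotProduct, Matrix.transpose_apply, inc_apply,
    add_mul, Finset.sum_add_distrib, ite_mul, sub_eq_add_neg]

lemma selE_apply {n p : ℕ} (hpn : p ≤ n) (i : Fin n) (j : Fin p) :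
    selE n p i j = if i = Fin.castLE hpn j then (1:ℝ) else 0 := by
  unfold selE
  simp only [Matrix.of_apply]
  congr 1
  simp [Fin.ext_iff, Fin.castLE]

lemma selE_T_mulVec {n p : ℕ} (hpn : p ≤ n) (v : Fin n → ℝ) (j : Fin p) :
    (selE n p)ᵀ.mulVec v j = v (Fin.castLE hpn j) := by
  simp [Matrix.mulVec, dotProduct, Matrix.transpose_apply, selE_apply hpn, ite_mul]

lemma selE_mulVec_sum {n p : ℕ} (hpn : p ≤ n) (u : Fin p → ℝ) :
    ∑ i, (selE n p).mulVec u i = ∑ j, u j := by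
  unfold Matrix.mulVec dotProduct
  rw [Finset.sum_comm]
  refine Finset.sum_congr rfl fun j _ => ?_
  simp [selE_apply hpn, ite_mul]

lemma lap_ker_const {p : ℕ} (hp : 0 < p) (L : Matrix (Fin p) (Fin p) ℝ)
    (hL : IsBalancedStronglyConnectedLaplacian L) (w : Fin p → ℝ)
    (hw : L.mulVec w = 0) : ∀ i j : Fin p, w i = w j := by
  haveI : Nonempty (Fin p) := ⟨⟨0, hp⟩⟩
  obtain ⟨i0, -, hmax⟩ := Finset.exists_max_image Finset.univ w ⟨⟨0, hp⟩, Finset.mem_univ _⟩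
  have hmax' : ∀ j, w j ≤ w i0 := fun j => hmax j (Finset.mem_univ j)
  -- every node reachable from i0 has w = w i0
  have key : ∀ j, w j = w i0 := by
    intro j
    have hrt := hL.sconn i0 j
    induction hrt with
    | refl => rfl
    | tail hab hbc ih =>
      rename_i b c
      -- ih : w b = w i0, hbc : b ≠ c ∧ L b c < 0
      have hrow : ∑ k, L b k = 0 := by
        have := congrFun hL.rowsum b
        simpa [Matrix.mulVec, dotProduct] using this
      have hLw : ∑ k, L b k * w k = 0 := by
        have := congrFun hw b
        simpa [Matrix.mulVec, dotProduct] using this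
      have hsum : ∑ k, L b k * (w k - w i0) = 0 := by
        have : ∑ k, L b k * (w k - w i0) = (∑ k, L b k * w k) - (∑ k, L b k) * w i0 := by
          rw [Finset.sum_mul, ← Finset.sum_sub_distrib]
          exact Finset.sum_congr rfl fun k _ => by ring
        rw [this, hLw, hrow]; ring
      have hnonneg : ∀ k ∈ Finset.univ, 0 ≤ L b k * (w k - w i0) := by
        intro k _
        rcases eq_or_ne k b with rfl | hk
        · rw [ih]; simp
        · exact mul_nonneg_of_nonpos_of_nonpos (hL.offdiag_nonpos b k (Ne.symm hk))
            (sub_nonpos.mpr (hmax' k))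
      have hall := (Finset.sum_eq_zero_iff_of_nonneg hnonneg).mp hsum
      have hc := hall c (Finset.mem_univ c)
      have : w c - w i0 = 0 := by
        rcases mul_eq_zero.mp hc with h | h
        · exact absurd h (ne_of_lt hbc.2)
        · exact h
      linarith
  intro i j; rw [key i, key j]

/-- Every equilibrium of the closed-loop system achieves output
regulation `h(x̄) = ȳ` and the optimal input `g(θ̄) = φ̄ = ū`. -/
theorem equilibrium_is_optimal {n m p : ℕ} (hp : 0 < p) (hpn : p ≤ n)
    (G : OrientedGraph n m) (hG : G.Connected)
    (h : Fin n → ℝ → ℝ) (hh : ∀ i, Continuous (h i) ∧ StrictMono (h i))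
    (f : Fin m → ℝ → ℝ) (hf : ∀ k, Continuous (f k) ∧ StrictMono (f k))
    (g : Fin p → ℝ → ℝ) (hg : ∀ i, Continuous (g i) ∧ StrictMono (g i))
    (q r : Fin p → ℝ) (hq : ∀ i, 0 < q i) (d ybar : Fin n → ℝ)
    (L : Matrix (Fin p) (Fin p) ℝ) (hL : IsBalancedStronglyConnectedLaplacian L)
    (xb : Fin n → ℝ) (mb xib : Fin m → ℝ) (thb phb : Fin p → ℝ)
    (heq1 : 0 = -(G.inc.mulVec (cw f mb)) + (selE n p).mulVec (cw g thb) - d)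
    (heq2 : 0 = (G.inc)ᵀ.mulVec (cw h xb - ybar) - (cw f mb - xib))
    (heq3 : 0 = cw f mb - xib)
    (heq4 : 0 = -((selE n p)ᵀ.mulVec (cw h xb - ybar)) - (cw g thb - phb))
    (heq5 : 0 = (cw g thb - phb) -
      (Matrix.diagonal q).mulVec (L.mulVec ((Matrix.diagonal q).mulVec phb + r))) :
    cw h xb = ybar ∧ cw g thb = phb ∧ cw g thb = uOpt q r d := by
  set v : Fin n → ℝ := cw h xb - ybar with hv
  -- Bᵀ v = 0
  have hBv : (G.inc)ᵀ.mulVec v = 0 := by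
    have := heq2
    rw [← heq3] at this
    simpa using this.symm
  -- v is constant
  have hvconst : ∀ i j : Fin n, v i = v j := by
    have hadj : ∀ i j, G.Adj i j → v i = v j := by
      rintro i j ⟨k, ⟨h1, h2⟩ | ⟨h1, h2⟩⟩
      · have := congrFun hBv k
        rw [incT_mulVec, h1, h2] at this
        simpa [sub_eq_zero] using this
      · have := congrFun hBv k
        rw [incT_mulVec, h1, h2] at this
        have : v j = v i := by simpa [sub_eq_zero] using this
        exact this.symm
    intro i j
    induction hG i j with
    | refl => rfl
    | tail _ hbc ih => exact ih.trans (hadj _ _ hbc)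
  set i0 : Fin p := ⟨0, hp⟩ with hi0
  set c : ℝ := v (Fin.castLE hpn i0) with hcdef
  have hvc : ∀ i : Fin n, v i = c := fun i => hvconst i _
  -- from heq4
  have hgphi : ∀ j : Fin p, cw g thb j - phb j = -c := by
    intro j
    have := congrFun heq4 j
    simp only [Pi.zero_apply, Pi.sub_apply, Pi.neg_apply] at this
    rw [selE_T_mulVec hpn, hvc (Fin.castLE hpn j)] at this
    linarith
  -- from heq5
  set w : Fin p → ℝ := fun i => q i * phb i + r i with hwdef
  have hw' : (Matrix.diagonal q).mulVec phb + r = w := by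
    funext i
    simp [Matrix.mulVec_diagonal, hwdef]
  have heq5' : ∀ i, q i * (L.mulVec w) i = -c := by
    intro i
    have := congrFun heq5 i
    rw [hw'] at this
    simp only [Pi.zero_apply, Pi.sub_apply, Matrix.mulVec_diagonal] at this
    rw [hgphi i] at this
    linarith
  have hLwi : ∀ i, (L.mulVec w) i = -c / q i := by
    intro i
    have hqi := (hq i).ne'
    field_simp
    rw [mul_comm]
    exact heq5' i
  -- sum of L.mulVec w is zero (column sums zero)
  have hsumLw : ∑ i, (L.mulVec w) i = 0 := by
    unfold Matrix.mulVec dotProduct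
    rw [Finset.sum_comm]
    refine Finset.sum_eq_zero fun j _ => ?_
    have := congrFun hL.colsum j
    simp only [Matrix.vecMul, dotProduct, Pi.zero_apply, one_mul] at this
    rw [← Finset.sum_mul, this, zero_mul]
  have hqsum : 0 < ∑ i : Fin p, (q i)⁻¹ :=
    Finset.sum_pos (fun i _ => inv_pos.mpr (hq i)) ⟨i0, Finset.mem_univ i0⟩
  have hc0 : c = 0 := by
    have : ∑ i, (L.mulVec w) i = -c * ∑ i, (q i)⁻¹ := by
      rw [Finset.mul_sum]
      exact Finset.sum_congr rfl fun i _ => by rw [hLwi i]; field_simp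
    rw [hsumLw] at this
    have := this.symm
    rcases mul_eq_zero.mp this with h | h
    · linarith
    · exact absurd h hqsum.ne'
  -- conclusion 1
  have hout : cw h xb = ybar := by
    funext i
    have := hvc i
    rw [hc0] at this
    simpa [hv, sub_eq_zero] using this
  have hgp : cw g thb = phb := by
    funext j
    have := hgphi j
    rw [hc0] at this
    simpa [sub_eq_zero] using this
  -- L w = 0, so w constant
  have hLw0 : L.mulVec w = 0 := by
    funext i
    simp [hLwi i, hc0]
  have hwconst := lap_ker_const hp L hL w hLw0
  set M : ℝ := w i0 with hM
  have hphb : ∀ i, phb i = (M - r i) / q i := by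
    intro i
    have : w i = M := hwconst i i0
    rw [hwdef] at this
    rw [eq_div_iff (hq i).ne']
    have h2 : q i * phb i + r i = M := this
    linarith
  -- from heq1
  have hsum1 : ∑ j, phb j = ∑ i, d i := by
    have h0 : ∑ i, ((0 : Fin n → ℝ)) i = ∑ i, (-(G.inc.mulVec (cw f mb)) + (selE n p).mulVec (cw g thb) - d) i := by
      rw [← heq1]
    simp only [Pi.zero_apply, Pi.sub_apply, Pi.add_apply, Pi.neg_apply] at h0
    rw [Finset.sum_eq_zero (fun i _ => rfl)] at h0
    have hBsum : ∑ i, (G.inc.mulVec (cw f mb)) i = 0 := by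
      unfold Matrix.mulVec dotProduct
      rw [Finset.sum_comm]
      refine Finset.sum_eq_zero fun k _ => ?_
      rw [← Finset.sum_mul, inc_colsum, zero_mul]
    have hEsum := selE_mulVec_sum hpn (cw g thb)
    rw [Finset.sum_sub_distrib, Finset.sum_add_distrib, Finset.sum_neg_distrib] at h0
    rw [hBsum, hEsum, hgp] at h0
    linarith
  have hMsum : M * (∑ i : Fin p, (q i)⁻¹) = (∑ i, d i) + ∑ i, r i / q i := by
    have : ∑ j, phb j = ∑ j, (M * (q j)⁻¹ - r j / q j) := by
      refine Finset.sum_congr rfl fun j _ => ?_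
      rw [hphb j]
      field_simp
    rw [hsum1] at this
    rw [Finset.sum_sub_distrib, ← Finset.mul_sum] at this
    linarith
  have hMlam : M = lamStar q r d := by
    unfold lamStar
    rw [eq_div_iff hqsum.ne']
    exact hMsum
  refine ⟨hout, hgp, ?_⟩
  rw [hgp]
  funext j
  rw [hphb j, hMlam]
  rfl
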